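/- Let d ≥ 2, κ ∈ (0,1), c > 0, let Γ ⊆ ℝ^d, and let K : {(z,w) ∈ Γ×Γ : z ≠ w} → ℂ satisfy |K(z,w)| ≤ c |z−w|^{−d} for all z,w ∈ Γ with z ≠ w, and |K(z,w) − K(z',w')| ≤ c (|z−z'| + |w−w'|)^κ |z−w|^{−(d+κ)} for all z, z', w, w' ∈ Γ with z ≠ w, z' ≠ w' and |z−z'| + |w−w'| ≤ ½|z−w|. Let g : ℝ^d → ℝ satisfy |g(x) − g(y)| ≤ |x−y| for all x, y ∈ ℝ^d, and define K_g(z,w) = (g(w) − g(z)) K(z,w). Then |K_g(z,w)| ≤ c |z−w|^{−(d−1)} for all z ≠ w in Γ, and |K_g(z,w) − K_g(z',w')| ≤ 3c (|z−z'| + |w−w'|)^κ |z−w|^{−(d−1+κ)} for all z, z', w, w' ∈ Γ with z ≠ w, z' ≠ w' and |z−z'| + |w−w'| ≤ ½|z−w|. -/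
import Mathlib


open Metric

/-- Lemma 9.6 (pointwise estimates): if `K` is a kernel on `Γ × Γ` satisfying
Calderón–Zygmund bounds of order `d` and `g : ℝ^d → ℝ` is `1`-Lipschitz, then
the kernel `K_g(z,w) = (g(w) − g(z)) K(z,w)` satisfies Calderón–Zygmund bounds
of order `d − 1`. -/
theorem commutator_kernel_CZ_bounds (d : ℕ) (hd : 2 ≤ d) (κ c : ℝ)
    (hκ : κ ∈ Set.Ioo (0 : ℝ) 1) (hc : 0 < c)
    (Γ : Set (EuclideanSpace ℝ (Fin d)))
    (K : EuclideanSpace ℝ (Fin d) → EuclideanSpace ℝ (Fin d) → ℂ)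
    (hK₁ : ∀ z ∈ Γ, ∀ w ∈ Γ, z ≠ w →
      ‖K z w‖ ≤ c * dist z w ^ (-(d : ℝ)))
    (hK₂ : ∀ z ∈ Γ, ∀ z' ∈ Γ, ∀ w ∈ Γ, ∀ w' ∈ Γ,
      z ≠ w → z' ≠ w' → dist z z' + dist w w' ≤ dist z w / 2 →
      ‖K z w - K z' w'‖ ≤
        c * (dist z z' + dist w w') ^ κ * dist z w ^ (-((d : ℝ) + κ)))
    (g : EuclideanSpace ℝ (Fin d) → ℝ)
    (hg : ∀ x y, |g x - g y| ≤ dist x y) :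
    (∀ z ∈ Γ, ∀ w ∈ Γ, z ≠ w →
      ‖(((g w - g z : ℝ)) : ℂ) * K z w‖ ≤ c * dist z w ^ (-((d : ℝ) - 1))) ∧
    (∀ z ∈ Γ, ∀ z' ∈ Γ, ∀ w ∈ Γ, ∀ w' ∈ Γ,
      z ≠ w → z' ≠ w' → dist z z' + dist w w' ≤ dist z w / 2 →
      ‖(((g w - g z : ℝ)) : ℂ) * K z w - (((g w' - g z' : ℝ)) : ℂ) * K z' w'‖ ≤
        3 * c * (dist z z' + dist w w') ^ κ *
          dist z w ^ (-((d : ℝ) - 1 + κ))) := by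
  obtain ⟨hκ0, hκ1⟩ := hκ
  constructor
  · intro z hz w hw hzw
    have hD : 0 < dist z w := dist_pos.2 hzw
    rw [norm_mul, Complex.norm_real, Real.norm_eq_abs]
    have h1 : |g w - g z| ≤ dist z w := by
      have := hg w z
      rwa [dist_comm w z] at this
    have h2 := hK₁ z hz w hw hzw
    calc |g w - g z| * ‖K z w‖
        ≤ dist z w * (c * dist z w ^ (-(d : ℝ))) :=
          mul_le_mul h1 h2 (norm_nonneg _) hD.le
      _ = c * (dist z w ^ (1:ℝ) * dist z w ^ (-(d : ℝ))) := by
          rw [Real.rpow_one]; ring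
      _ = c * dist z w ^ (-((d : ℝ) - 1)) := by
          rw [← Real.rpow_add hD]; congr 1; ring
  · intro z hz z' hz' w hw w' hw' hzw hzw' hs
    have hD : 0 < dist z w := dist_pos.2 hzw
    set s := dist z z' + dist w w' with hs_def
    have hs0 : 0 ≤ s := by positivity
    rcases eq_or_lt_of_le hs0 with h0 | hspos
    · have hzz : z = z' := by
        have h1 : dist z z' = 0 := le_antisymm (by
          have := dist_nonneg (x := w) (y := w'); linarith [h0.symm.le]) dist_nonneg
        exact dist_eq_zero.1 h1
      have hww : w = w' := by
        have h1 : dist w w' = 0 := le_antisymm (by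
          have := dist_nonneg (x := z) (y := z'); linarith [h0.symm.le]) dist_nonneg
        exact dist_eq_zero.1 h1
      subst hzz; subst hww
      simp only [sub_self, norm_zero]
      positivity
    · have hsD : s ≤ dist z w := by linarith
      have e1 : dist z w ^ ((1:ℝ) - κ) * dist z w ^ (-(d : ℝ)) =
          dist z w ^ (-((d : ℝ) - 1 + κ)) := by
        rw [← Real.rpow_add hD]; congr 1; ring
      have e2 : dist z w * dist z w ^ (-((d : ℝ) + κ)) =
          dist z w ^ (-((d : ℝ) - 1 + κ)) := by
        nth_rewrite 1 [← Real.rpow_one (dist z w)]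
        rw [← Real.rpow_add hD]; congr 1; ring
      set E := dist z w ^ (-((d : ℝ) - 1 + κ)) with hE_def
      have hE0 : 0 ≤ E := Real.rpow_nonneg hD.le _
      have hsplit : (((g w - g z : ℝ)) : ℂ) * K z w - (((g w' - g z' : ℝ)) : ℂ) * K z' w' =
          ((((g w - g z : ℝ)) : ℂ) - (((g w' - g z' : ℝ)) : ℂ)) * K z w +
          (((g w' - g z' : ℝ)) : ℂ) * (K z w - K z' w') := by ring
      -- term A
      have hA : ‖((((g w - g z : ℝ)) : ℂ) - (((g w' - g z' : ℝ)) : ℂ)) * K z w‖ ≤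
          c * s ^ κ * E := by
        rw [norm_mul, ← Complex.ofReal_sub, Complex.norm_real, Real.norm_eq_abs]
        have h1 : |g w - g z - (g w' - g z')| ≤ s := by
          have k1 := hg w w'
          have k2 := hg z z'
          have key : |(g w - g w') - (g z - g z')| ≤ |g w - g w'| + |g z - g z'| :=
            abs_sub _ _
          have eq1 : |g w - g z - (g w' - g z')| = |(g w - g w') - (g z - g z')| := by
            congr 1; ring
          rw [hs_def]; rw [eq1]
          have k1' : |g w - g w'| ≤ dist w w' := hg w w'
          have k2' : |g z - g z'| ≤ dist z z' := hg z z'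
          linarith
        have h2 := hK₁ z hz w hw hzw
        have h3 : s ≤ s ^ κ * dist z w ^ ((1:ℝ) - κ) := by
          have e3 : s = s ^ κ * s ^ ((1:ℝ) - κ) := by
            rw [← Real.rpow_add hspos, show κ + ((1:ℝ) - κ) = (1:ℝ) by ring,
              Real.rpow_one]
          have h4 : s ^ ((1:ℝ) - κ) ≤ dist z w ^ ((1:ℝ) - κ) :=
            Real.rpow_le_rpow hspos.le hsD (by linarith)
          calc s = s ^ κ * s ^ ((1:ℝ) - κ) := e3
            _ ≤ s ^ κ * dist z w ^ ((1:ℝ) - κ) :=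
              mul_le_mul_of_nonneg_left h4 (Real.rpow_nonneg hspos.le _)
        calc |g w - g z - (g w' - g z')| * ‖K z w‖
            ≤ s * (c * dist z w ^ (-(d : ℝ))) :=
              mul_le_mul h1 h2 (norm_nonneg _) hspos.le
          _ ≤ (s ^ κ * dist z w ^ ((1:ℝ) - κ)) * (c * dist z w ^ (-(d : ℝ))) := by
              apply mul_le_mul_of_nonneg_right h3 (by positivity)
          _ = c * s ^ κ * (dist z w ^ ((1:ℝ) - κ) * dist z w ^ (-(d : ℝ))) := by ring
          _ = c * s ^ κ * E := by rw [e1]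
      -- term B
      have hB : ‖(((g w' - g z' : ℝ)) : ℂ) * (K z w - K z' w')‖ ≤
          (3/2) * (c * s ^ κ * E) := by
        rw [norm_mul, Complex.norm_real, Real.norm_eq_abs]
        have h1 : |g w' - g z'| ≤ (3/2) * dist z w := by
          have k1 := hg w' z'
          have t := dist_triangle4 w' w z z'
          have c1 : dist w' w = dist w w' := dist_comm _ _
          have c2 : dist w z = dist z w := dist_comm _ _
          have c3 : dist w' z' = dist z' w' := dist_comm _ _
          rw [hs_def] at hs
          linarith
        have h2 := hK₂ z hz z' hz' w hw w' hw' hzw hzw' hs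
        calc |g w' - g z'| * ‖K z w - K z' w'‖
            ≤ ((3/2) * dist z w) * (c * s ^ κ * dist z w ^ (-((d : ℝ) + κ))) :=
              mul_le_mul h1 h2 (norm_nonneg _) (by positivity)
          _ = (3/2) * (c * s ^ κ * (dist z w * dist z w ^ (-((d : ℝ) + κ)))) := by ring
          _ = (3/2) * (c * s ^ κ * E) := by rw [e2]
      have hX : 0 ≤ c * s ^ κ * E := by positivity
      calc ‖(((g w - g z : ℝ)) : ℂ) * K z w - (((g w' - g z' : ℝ)) : ℂ) * K z' w'‖
          = ‖((((g w - g z : ℝ)) : ℂ) - (((g w' - g z' : ℝ)) : ℂ)) * K z w +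
            (((g w' - g z' : ℝ)) : ℂ) * (K z w - K z' w')‖ := by rw [hsplit]
        _ ≤ ‖((((g w - g z : ℝ)) : ℂ) - (((g w' - g z' : ℝ)) : ℂ)) * K z w‖ +
            ‖(((g w' - g z' : ℝ)) : ℂ) * (K z w - K z' w')‖ := norm_add_le _ _
        _ ≤ c * s ^ κ * E + (3/2) * (c * s ^ κ * E) := add_le_add hA hB
        _ ≤ 3 * c * s ^ κ * E := by nlinarith
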